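/- Let Σ be a finite nonempty alphabet and let L ⊆ ℬ^Σ be a regular tree language with P_lim(L) = 0. Then there exists a tree S ∈ ℬ^Σ such that {T ∈ ℬ^Σ : S ⪯ T} ∩ L = ∅, i.e. S is a forbidden subtree for L. -/

import Mathlib

open Filter Topology

namespace Sparse

inductive BTree (α : Type*) where
  | nil : BTree α
  | node : α → BTree α → BTree α → BTree α

namespace BTree

variable {α : Type*}

/-- The number of nodes of a binary tree. -/
def size : BTree α → ℕ
  | nil => 0
  | node _ l r => size l + size r + 1

/-- `Subtree S T` means `S = T`, or `T` is nonempty and `S` is a subtree of the left or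
right subtree of the root of `T`. -/
inductive Subtree : BTree α → BTree α → Prop where
  | refl (T : BTree α) : Subtree T T
  | left {S l r : BTree α} {a : α} : Subtree S l → Subtree S (node a l r)
  | right {S l r : BTree α} {a : α} : Subtree S r → Subtree S (node a l r)

end BTree

variable {α : Type*}

/-- A run of a tree automaton with transition relation `Δ` on a binary tree: the empty tree is
assigned `none` (i.e. `⊥`), and a nonempty tree with root label `a` and run values `ql`, `qr` on
the two subtrees is assigned a state `q` with `(ql, qr, a, q) ∈ Δ`. -/
inductive Run {Q : Type*} (Δ : Option Q → Option Q → α → Q → Prop) :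
    BTree α → Option Q → Prop where
  | nil : Run Δ BTree.nil none
  | node {a : α} {l r : BTree α} {ql qr : Option Q} {q : Q} :
      Run Δ l ql → Run Δ r qr → Δ ql qr a q → Run Δ (BTree.node a l r) (some q)

/-- A tree automaton with transitions `Δ` and accepting states `F` accepts `T` if some run
assigns `T` a state in `F`. -/
def TAccepts {Q : Type*} (Δ : Option Q → Option Q → α → Q → Prop) (F : Set Q)
    (T : BTree α) : Prop :=
  ∃ q ∈ F, Run Δ T (some q)

/-- A tree language is regular iff it is the set of trees accepted by some tree automaton
with finitely many states. -/
def RegularTreeLang (L : Set (BTree α)) : Prop :=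
  ∃ (Q : Type) (_ : Fintype Q) (Δ : Option Q → Option Q → α → Q → Prop) (F : Set Q),
    L = {T | TAccepts Δ F T}

/-- The relative number of `n`-node trees in `L`:
`|L ∩ ℬ^Σ_n| / (C_n ⬝ |Σ|^n)`, where `C_n` is the `n`-th Catalan number. -/
noncomputable def density [Fintype α] (L : Set (BTree α)) (n : ℕ) : ℝ :=
  (Nat.card {T : BTree α // T ∈ L ∧ T.size = n} : ℝ) /
    ((catalan n : ℝ) * (Fintype.card α : ℝ) ^ n)

/-- `L` has asymptotic density `c` if `density L n` tends to `c` as `n → ∞`. -/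
def HasDensity [Fintype α] (L : Set (BTree α)) (c : ℝ) : Prop :=
  Tendsto (density L) atTop (𝓝 c)

/-- The upper asymptotic density `P̄_lim(L) = limsup_n density L n`. -/
noncomputable def upperDensity [Fintype α] (L : Set (BTree α)) : ℝ :=
  limsup (density L) atTop

/-- `LT = {conc_a(S, T) : a ∈ Σ, S ∈ L}`. -/
def concL (L : Set (BTree α)) (T : BTree α) : Set (BTree α) :=
  {X | ∃ (a : α) (S : BTree α), S ∈ L ∧ X = BTree.node a S T}

/-- `LT⁻¹ = {S : ∃ a, conc_a(S, T) ∈ L}`. -/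
def quotR (L : Set (BTree α)) (T : BTree α) : Set (BTree α) :=
  {S | ∃ a : α, BTree.node a S T ∈ L}

/-- `T⁻¹L = {S : ∃ a, conc_a(T, S) ∈ L}`. -/
def quotL (T : BTree α) (L : Set (BTree α)) : Set (BTree α) :=
  {S | ∃ a : α, BTree.node a T S ∈ L}

/-- `L[T_k, …, T_1]⁻¹`, where the list is `[T_k, …, T_1]` (so the head is `T_k`):
`L[]⁻¹ = L` and `L[T_k,…,T_1]⁻¹ = (L[T_{k-1},…,T_1]⁻¹)T_k⁻¹ ∪ T_k⁻¹(L[T_{k-1},…,T_1]⁻¹)`. -/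
def quotIter (L : Set (BTree α)) : List (BTree α) → Set (BTree α)
  | [] => L
  | T :: Ts => quotR (quotIter L Ts) T ∪ quotL T (quotIter L Ts)

/-- A state `q` is reachable if some run of the automaton on some tree assigns `q` to the tree. -/
def TReachable {Q : Type*} (Δ : Option Q → Option Q → α → Q → Prop) (q : Q) : Prop :=
  ∃ T : BTree α, Run Δ T (some q)

/-- A set of states `V` is a sink if every transition involving a state of `V` as one of the
two child values leads into `V`. -/
def Sink {Q : Type*} (Δ : Option Q → Option Q → α → Q → Prop) (V : Set Q) : Prop :=
  ∀ q ∈ V, ∀ (q' : Option Q) (a : α) (q'' : Q),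
    (Δ (some q) q' a q'' ∨ Δ q' (some q) a q'') → q'' ∈ V

----------------------------------------------------------------------
-- AUXILIARY DEVELOPMENT
----------------------------------------------------------------------

/-! ### Catalan estimates -/

theorem catalan_pos' (n : ℕ) : 0 < catalan n := by
  have h := succ_mul_catalan_eq_centralBinom n
  have h2 := n.centralBinom_pos
  by_contra hc
  push_neg at hc
  interval_cases c : catalan n
  · omega

theorem catalan_succ_le (n : ℕ) : catalan (n + 1) ≤ 4 * catalan n := by
  have h1 := Nat.succ_mul_centralBinom_succ n
  have h2 := succ_mul_catalan_eq_centralBinom n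
  have h3 := succ_mul_catalan_eq_centralBinom (n + 1)
  have key : (n + 1) * ((n + 2) * catalan (n + 1)) = (n + 1) * ((4 * n + 2) * catalan n) := by
    rw [h3]; rw [h1]; ring_nf; rw [← h2]; ring
  have key2 : (n + 2) * catalan (n + 1) = (4 * n + 2) * catalan n :=
    Nat.eq_of_mul_eq_mul_left (by omega) key
  nlinarith [catalan_pos' n]

theorem catalan_add_le (n k : ℕ) : catalan (n + k) ≤ 4 ^ k * catalan n := by
  induction k with
  | zero => simp
  | succ m ih =>
    calc catalan (n + (m + 1)) = catalan ((n + m) + 1) := by ring_nf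
      _ ≤ 4 * catalan (n + m) := catalan_succ_le _
      _ ≤ 4 * (4 ^ m * catalan n) := by omega
      _ = 4 ^ (m + 1) * catalan n := by ring

/-! ### Counting trees -/

theorem size_eq_zero {T : BTree α} (h : T.size = 0) : T = BTree.nil := by
  cases T with
  | nil => rfl
  | node a l r => simp [BTree.size] at h

instance : Unique {T : BTree α // T.size = 0} where
  default := ⟨BTree.nil, rfl⟩
  uniq := fun ⟨T, h⟩ => Subtype.ext (size_eq_zero h)

noncomputable def sizeEquiv (n : ℕ) :
    {T : BTree α // T.size = n + 1} ≃
      α × Σ i : Fin (n + 1), {l : BTree α // l.size = (i : ℕ)} ×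
        {r : BTree α // r.size = n - (i : ℕ)} where
  toFun := fun ⟨T, hT⟩ =>
    match T, hT with
    | BTree.node a l r, hT =>
      (a, ⟨⟨l.size, by simp [BTree.size] at hT; omega⟩, ⟨l, rfl⟩,
        ⟨r, show r.size = n - l.size by simp [BTree.size] at hT; omega⟩⟩)
  invFun := fun ⟨a, ⟨i, ⟨l, hl⟩, ⟨r, hr⟩⟩⟩ =>
    ⟨BTree.node a l r, by have := i.isLt; simp [BTree.size]; omega⟩
  left_inv := fun ⟨T, hT⟩ => by
    match T, hT with
    | BTree.node a l r, hT => rfl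
  right_inv := fun x => by
    obtain ⟨a, ⟨iv, hi⟩, ⟨l, hl⟩, ⟨r, hr⟩⟩ := x
    rw [Fin.val_mk] at hl hr
    subst hl
    rfl

instance finite_size [Fintype α] (n : ℕ) : Finite {T : BTree α // T.size = n} := by
  induction n using Nat.strong_induction_on with
  | _ n ih =>
    cases n with
    | zero => infer_instance
    | succ m =>
      haveI : ∀ i : Fin (m + 1), Finite ({l : BTree α // l.size = (i : ℕ)} ×
          {r : BTree α // r.size = m - (i : ℕ)}) := by
        intro i
        haveI := ih i i.isLt
        haveI := ih (m - i) (by omega)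
        infer_instance
      exact Finite.of_equiv _ (sizeEquiv m).symm

theorem card_size [Fintype α] (n : ℕ) :
    Nat.card {T : BTree α // T.size = n} = catalan n * Fintype.card α ^ n := by
  induction n using Nat.strong_induction_on with
  | _ n ih =>
    cases n with
    | zero => simp [Nat.card_unique]
    | succ m =>
      rw [Nat.card_congr (sizeEquiv m), Nat.card_prod, Nat.card_eq_fintype_card (α := α)]
      haveI : ∀ i : Fin (m + 1), Fintype {l : BTree α // l.size = (i : ℕ)} :=
        fun i => Fintype.ofFinite _
      haveI : ∀ i : Fin (m + 1), Fintype {r : BTree α // r.size = m - (i : ℕ)} :=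
        fun i => Fintype.ofFinite _
      rw [Nat.card_eq_fintype_card, Fintype.card_sigma]
      have : ∀ i : Fin (m + 1),
          Fintype.card ({l : BTree α // l.size = (i : ℕ)} × {r : BTree α // r.size = m - (i : ℕ)})
          = (catalan i * Fintype.card α ^ (i : ℕ)) *
            (catalan (m - i) * Fintype.card α ^ (m - (i : ℕ))) := by
        intro i
        rw [Fintype.card_prod, ← Nat.card_eq_fintype_card, ← Nat.card_eq_fintype_card,
          ih i i.isLt, ih (m - i) (by omega)]
      rw [Finset.sum_congr rfl (fun i _ => this i)]
      rw [catalan_succ, Finset.sum_mul, pow_succ, Finset.mul_sum]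
      refine Finset.sum_congr rfl (fun i _ => ?_)
      have hp : Fintype.card α ^ (i : ℕ) * Fintype.card α ^ (m - (i : ℕ))
          = Fintype.card α ^ m := by
        rw [← pow_add]; congr 1; omega
      calc Fintype.card α * (catalan i * Fintype.card α ^ (i : ℕ) *
            (catalan (m - i) * Fintype.card α ^ (m - (i : ℕ))))
          = catalan i * catalan (m - i) *
            (Fintype.card α ^ (i : ℕ) * Fintype.card α ^ (m - (i : ℕ)) * Fintype.card α) := by
            ring
        _ = catalan ↑i * catalan (m - ↑i) * (Fintype.card α ^ m * Fintype.card α) := by rw [hp]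

/-! ### Basic density facts -/

section DensityFacts

variable [Fintype α] [Nonempty α]

instance finite_memSize (L : Set (BTree α)) (n : ℕ) :
    Finite {T : BTree α // T ∈ L ∧ T.size = n} :=
  Finite.of_injective (fun x => (⟨x.1, x.2.2⟩ : {T : BTree α // T.size = n}))
    (by intro x y h; exact Subtype.ext (by simpa using congrArg Subtype.val h))

theorem denom_pos (n : ℕ) : (0 : ℝ) < (catalan n : ℝ) * (Fintype.card α : ℝ) ^ n := by
  have h1 := catalan_pos' n
  have h2 := Fintype.card_pos (α := α)
  positivity

theorem density_nonneg (L : Set (BTree α)) (n : ℕ) : 0 ≤ density L n := by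
  apply div_nonneg (by positivity) (le_of_lt (denom_pos n))

theorem card_union_le (A B : Set (BTree α)) (n : ℕ) :
    Nat.card {T : BTree α // T ∈ A ∪ B ∧ T.size = n} ≤
      Nat.card {T : BTree α // T ∈ A ∧ T.size = n} +
      Nat.card {T : BTree α // T ∈ B ∧ T.size = n} := by
  classical
  rw [← Nat.card_sum]
  apply Nat.card_le_card_of_injective
    (f := fun x => if h : x.1 ∈ A then Sum.inl ⟨x.1, h, x.2.2⟩
      else Sum.inr ⟨x.1, x.2.1.resolve_left h, x.2.2⟩)
  intro x y hxy
  by_cases hx : x.1 ∈ A <;> by_cases hy : y.1 ∈ A <;>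
    simp [hx, hy] at hxy <;> exact Subtype.ext hxy

theorem density_union_le (A B : Set (BTree α)) (n : ℕ) :
    density (A ∪ B) n ≤ density A n + density B n := by
  unfold density
  rw [← add_div]
  have h := card_union_le A B n
  have h2 : ((Nat.card {T : BTree α // T ∈ A ∪ B ∧ T.size = n} : ℕ) : ℝ) ≤
      ((Nat.card {T : BTree α // T ∈ A ∧ T.size = n} +
        Nat.card {T : BTree α // T ∈ B ∧ T.size = n} : ℕ) : ℝ) := by exact_mod_cast h
  push_cast at h2
  exact div_le_div_of_nonneg_right h2 (denom_pos n).le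

theorem hasDensity_empty : HasDensity (∅ : Set (BTree α)) 0 := by
  have : ∀ n, density (∅ : Set (BTree α)) n = 0 := by
    intro n
    unfold density
    haveI : IsEmpty {T : BTree α // T ∈ (∅ : Set (BTree α)) ∧ T.size = n} :=
      ⟨fun x => x.2.1⟩
    rw [Nat.card_of_isEmpty]
    simp
  rw [HasDensity, funext this]
  exact tendsto_const_nhds

theorem hasDensity_union {A B : Set (BTree α)} (hA : HasDensity A 0) (hB : HasDensity B 0) :
    HasDensity (A ∪ B) 0 :=
  squeeze_zero (density_nonneg _) (density_union_le A B)
    (by simpa using hA.add hB)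

end DensityFacts


/-! ### Quotient density lemmas -/

section Quot

variable [Fintype α] [Nonempty α]

theorem card_quotR_le (M : Set (BTree α)) (T : BTree α) (n : ℕ) :
    Nat.card {S : BTree α // S ∈ quotR M T ∧ S.size = n} ≤
      Fintype.card α * Nat.card {X : BTree α // X ∈ M ∧ X.size = n + T.size + 1} := by
  classical
  rw [← Nat.card_eq_fintype_card (α := α), ← Nat.card_prod]
  apply Nat.card_le_card_of_injective
    (f := fun x => (x.2.1.choose,
      ⟨BTree.node x.2.1.choose x.1 T, x.2.1.choose_spec, by simp [BTree.size, x.2.2]⟩))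
  intro x y hxy
  have h2 := congrArg (fun p => p.2.1) hxy
  simp only [BTree.node.injEq] at h2
  exact Subtype.ext h2.2.1

theorem card_quotL_le (M : Set (BTree α)) (T : BTree α) (n : ℕ) :
    Nat.card {S : BTree α // S ∈ quotL T M ∧ S.size = n} ≤
      Fintype.card α * Nat.card {X : BTree α // X ∈ M ∧ X.size = n + T.size + 1} := by
  classical
  rw [← Nat.card_eq_fintype_card (α := α), ← Nat.card_prod]
  apply Nat.card_le_card_of_injective
    (f := fun x => (x.2.1.choose,
      ⟨BTree.node x.2.1.choose T x.1, x.2.1.choose_spec,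
        by simp [BTree.size, x.2.2]; omega⟩))
  intro x y hxy
  have h2 := congrArg (fun p => p.2.1) hxy
  simp only [BTree.node.injEq] at h2
  exact Subtype.ext h2.2.2

theorem density_quot_le (M N : Set (BTree α)) (k n : ℕ)
    (hcard : Nat.card {S : BTree α // S ∈ N ∧ S.size = n} ≤
      Fintype.card α * Nat.card {X : BTree α // X ∈ M ∧ X.size = n + k + 1}) :
    density N n ≤ (Fintype.card α : ℝ) ^ (k + 2) * 4 ^ (k + 1) * density M (n + k + 1) := by
  have hσ : (0 : ℝ) < (Fintype.card α : ℝ) := by exact_mod_cast Fintype.card_pos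
  have hc : (0 : ℝ) < (catalan n : ℝ) := by exact_mod_cast catalan_pos' n
  have hc' : (0 : ℝ) < (catalan (n + k + 1) : ℝ) := by exact_mod_cast catalan_pos' (n + k + 1)
  have hcat : (catalan (n + k + 1) : ℝ) ≤ 4 ^ (k + 1) * (catalan n : ℝ) := by
    have := catalan_add_le n (k + 1)
    have h2 : catalan (n + k + 1) ≤ 4 ^ (k + 1) * catalan n := by
      convert this using 2
      try omega
    exact_mod_cast h2
  have hA : ((Nat.card {S : BTree α // S ∈ N ∧ S.size = n} : ℕ) : ℝ) ≤
      (Fintype.card α : ℝ) * (Nat.card {X : BTree α // X ∈ M ∧ X.size = n + k + 1} : ℕ) := by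
    exact_mod_cast hcard
  set A := ((Nat.card {S : BTree α // S ∈ N ∧ S.size = n} : ℕ) : ℝ) with hAdef
  set B := ((Nat.card {X : BTree α // X ∈ M ∧ X.size = n + k + 1} : ℕ) : ℝ) with hBdef
  have hB0 : 0 ≤ B := Nat.cast_nonneg _
  have hA0 : 0 ≤ A := Nat.cast_nonneg _
  unfold density
  rw [← hAdef, ← hBdef, ← mul_div_assoc, div_le_div_iff₀ (denom_pos n) (denom_pos (n + k + 1))]
  have hpow : (Fintype.card α : ℝ) ^ (n + k + 1) =
      (Fintype.card α : ℝ) ^ n * (Fintype.card α : ℝ) ^ (k + 1) := by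
    ring
  have hpow2 : (Fintype.card α : ℝ) ^ (k + 2) =
      (Fintype.card α : ℝ) * (Fintype.card α : ℝ) ^ (k + 1) := by
    rw [← pow_succ']
  rw [hpow, hpow2]
  have key : A * (catalan (n + k + 1) : ℝ) ≤
      ((Fintype.card α : ℝ) * B) * (4 ^ (k + 1) * (catalan n : ℝ)) := by
    exact mul_le_mul hA hcat hc'.le (by positivity)
  calc A * ((catalan (n + k + 1) : ℝ) * ((Fintype.card α : ℝ) ^ n * (Fintype.card α : ℝ) ^ (k + 1)))
      = (A * (catalan (n + k + 1) : ℝ)) * ((Fintype.card α : ℝ) ^ n * (Fintype.card α : ℝ) ^ (k + 1)) := by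
        ring
    _ ≤ (((Fintype.card α : ℝ) * B) * (4 ^ (k + 1) * (catalan n : ℝ))) *
        ((Fintype.card α : ℝ) ^ n * (Fintype.card α : ℝ) ^ (k + 1)) := by
        apply mul_le_mul_of_nonneg_right key
        positivity
    _ = (Fintype.card α : ℝ) * (Fintype.card α : ℝ) ^ (k + 1) * 4 ^ (k + 1) * B *
        ((catalan n : ℝ) * (Fintype.card α : ℝ) ^ n) := by ring

theorem hasDensity_quotR {M : Set (BTree α)} (h : HasDensity M 0) (T : BTree α) :
    HasDensity (quotR M T) 0 := by
  apply squeeze_zero (density_nonneg _)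
    (fun n => density_quot_le M (quotR M T) T.size n (card_quotR_le M T n))
  have h2 : Tendsto (fun n => density M (n + (T.size + 1))) atTop (𝓝 0) :=
    h.comp (tendsto_add_atTop_nat (T.size + 1))
  have h3 := h2.const_mul ((Fintype.card α : ℝ) ^ (T.size + 2) * 4 ^ (T.size + 1))
  simpa [add_assoc] using h3

theorem hasDensity_quotL {M : Set (BTree α)} (h : HasDensity M 0) (T : BTree α) :
    HasDensity (quotL T M) 0 := by
  apply squeeze_zero (density_nonneg _)
    (fun n => density_quot_le M (quotL T M) T.size n (card_quotL_le M T n))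
  have h2 : Tendsto (fun n => density M (n + (T.size + 1))) atTop (𝓝 0) :=
    h.comp (tendsto_add_atTop_nat (T.size + 1))
  have h3 := h2.const_mul ((Fintype.card α : ℝ) ^ (T.size + 2) * 4 ^ (T.size + 1))
  simpa [add_assoc] using h3

theorem hasDensity_quotIter {L : Set (BTree α)} (h : HasDensity L 0) (Ts : List (BTree α)) :
    HasDensity (quotIter L Ts) 0 := by
  induction Ts with
  | nil => exact h
  | cons T Ts ih => exact hasDensity_union (hasDensity_quotR ih T) (hasDensity_quotL ih T)

end Quot


/-! ### Languages of automata and quotients -/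

section Lang

variable {Q : Type} (Δ : Option Q → Option Q → α → Q → Prop)

def langOf (F : Set Q) (b : Prop) : Set (BTree α) :=
  {T | TAccepts Δ F T ∨ (b ∧ T = BTree.nil)}

theorem run_none {T : BTree α} (h : Run Δ T none) : T = BTree.nil := by
  cases h; rfl

theorem run_node_inv {a : α} {l r : BTree α} {v : Option Q}
    (h : Run Δ (BTree.node a l r) v) :
    ∃ q ql qr, v = some q ∧ Run Δ l ql ∧ Run Δ r qr ∧ Δ ql qr a q := by
  cases h with
  | node hl hr hΔ => exact ⟨_, _, _, rfl, hl, hr, hΔ⟩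

theorem quotR_langOf (F : Set Q) (b : Prop) (T : BTree α) :
    quotR (langOf Δ F b) T =
      langOf Δ {p | ∃ a, ∃ q ∈ F, ∃ qr, Run Δ T qr ∧ Δ (some p) qr a q}
        (∃ a, ∃ q ∈ F, ∃ qr, Run Δ T qr ∧ Δ none qr a q) := by
  ext S
  simp only [quotR, langOf, TAccepts, Set.mem_setOf_eq]
  constructor
  · rintro ⟨a, (⟨q, hqF, hrun⟩ | ⟨_, hk⟩)⟩
    · obtain ⟨q2, ql, qr, heq, hl, hr, hΔ⟩ := run_node_inv Δ hrun
      have hqF2 : q2 ∈ F := by injection heq with h; rwa [h] at hqF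
      cases ql with
      | none => exact Or.inr ⟨⟨a, q2, hqF2, qr, hr, hΔ⟩, run_none Δ hl⟩
      | some p => exact Or.inl ⟨p, ⟨a, q2, hqF2, qr, hr, hΔ⟩, hl⟩
    · exact absurd hk (by simp)
  · rintro (⟨p, ⟨a, q, hqF, qr, hrT, hΔ⟩, hrS⟩ | ⟨⟨a, q, hqF, qr, hrT, hΔ⟩, rfl⟩)
    · exact ⟨a, Or.inl ⟨q, hqF, Run.node hrS hrT hΔ⟩⟩
    · exact ⟨a, Or.inl ⟨q, hqF, Run.node Run.nil hrT hΔ⟩⟩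

theorem quotL_langOf (F : Set Q) (b : Prop) (T : BTree α) :
    quotL T (langOf Δ F b) =
      langOf Δ {p | ∃ a, ∃ q ∈ F, ∃ ql, Run Δ T ql ∧ Δ ql (some p) a q}
        (∃ a, ∃ q ∈ F, ∃ ql, Run Δ T ql ∧ Δ ql none a q) := by
  ext S
  simp only [quotL, langOf, TAccepts, Set.mem_setOf_eq]
  constructor
  · rintro ⟨a, (⟨q, hqF, hrun⟩ | ⟨_, hk⟩)⟩
    · obtain ⟨q2, ql, qr, heq, hl, hr, hΔ⟩ := run_node_inv Δ hrun
      have hqF2 : q2 ∈ F := by injection heq with h; rwa [h] at hqF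
      cases qr with
      | none => exact Or.inr ⟨⟨a, q2, hqF2, ql, hl, hΔ⟩, run_none Δ hr⟩
      | some p => exact Or.inl ⟨p, ⟨a, q2, hqF2, ql, hl, hΔ⟩, hr⟩
    · exact absurd hk (by simp)
  · rintro (⟨p, ⟨a, q, hqF, ql, hrT, hΔ⟩, hrS⟩ | ⟨⟨a, q, hqF, ql, hrT, hΔ⟩, rfl⟩)
    · exact ⟨a, Or.inl ⟨q, hqF, Run.node hrT hrS hΔ⟩⟩
    · exact ⟨a, Or.inl ⟨q, hqF, Run.node hrT Run.nil hΔ⟩⟩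

theorem union_langOf (F F' : Set Q) (b b' : Prop) :
    langOf Δ F b ∪ langOf Δ F' b' = langOf Δ (F ∪ F') (b ∨ b') := by
  ext T
  simp only [langOf, Set.mem_union, Set.mem_setOf_eq, TAccepts]
  constructor
  · rintro ((⟨q, hq, hr⟩ | ⟨hb, rfl⟩) | (⟨q, hq, hr⟩ | ⟨hb, rfl⟩))
    · exact Or.inl ⟨q, Or.inl hq, hr⟩
    · exact Or.inr ⟨Or.inl hb, rfl⟩
    · exact Or.inl ⟨q, Or.inr hq, hr⟩
    · exact Or.inr ⟨Or.inr hb, rfl⟩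
  · rintro (⟨q, (hq | hq), hr⟩ | ⟨(hb | hb), rfl⟩)
    · exact Or.inl (Or.inl ⟨q, hq, hr⟩)
    · exact Or.inr (Or.inl ⟨q, hq, hr⟩)
    · exact Or.inl (Or.inr ⟨hb, rfl⟩)
    · exact Or.inr (Or.inr ⟨hb, rfl⟩)

theorem isLang_quotIter (F : Set Q) (Ts : List (BTree α)) :
    ∃ (F' : Set Q) (b' : Prop),
      quotIter {T : BTree α | TAccepts Δ F T} Ts = langOf Δ F' b' := by
  induction Ts with
  | nil =>
    refine ⟨F, False, ?_⟩
    ext T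
    simp [langOf, quotIter]
  | cons T Ts ih =>
    obtain ⟨F', b', h⟩ := ih
    exact ⟨_, _, by rw [quotIter, h, quotR_langOf, quotL_langOf, union_langOf]⟩

end Lang

/-! ### Finite unions of density-zero sets -/

theorem hasDensity_biUnion_zero [Fintype α] [Nonempty α] {ι : Type} (f : ι → Set (BTree α))
    (s : Finset ι) (h : ∀ i, HasDensity (f i) 0) :
    HasDensity (⋃ i ∈ (s : Set ι), f i) 0 := by
  classical
  induction s using Finset.induction_on with
  | empty => simpa using hasDensity_empty
  | @insert a s ha ih =>
    have heq : (⋃ i ∈ ((insert a s : Finset ι) : Set ι), f i)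
        = f a ∪ ⋃ i ∈ (s : Set ι), f i := by
      simp [Set.biUnion_insert]
    rw [heq]
    exact hasDensity_union (h a) ih

theorem hasDensity_iUnion_zero [Fintype α] [Nonempty α] {ι : Type} [Finite ι]
    (f : ι → Set (BTree α)) (h : ∀ i, HasDensity (f i) 0) :
    HasDensity (⋃ i, f i) 0 := by
  haveI := Fintype.ofFinite ι
  have : (⋃ i, f i) = ⋃ i ∈ ((Finset.univ : Finset ι) : Set ι), f i := by
    simp
  rw [this]
  exact hasDensity_biUnion_zero f Finset.univ h

/-! ### The key pigeonhole argument -/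

theorem exists_not_mem_quotIter [Fintype α] [Nonempty α] {Q : Type} [Fintype Q]
    (Δ : Option Q → Option Q → α → Q → Prop) (F : Set Q)
    (h0 : HasDensity {T : BTree α | TAccepts Δ F T} 0) :
    ∃ S : BTree α, ∀ Ts : List (BTree α),
      S ∉ quotIter {T : BTree α | TAccepts Δ F T} Ts := by
  classical
  set L := {T : BTree α | TAccepts Δ F T} with hLdef
  by_contra hcon
  push_neg at hcon
  set g : Set Q × Prop → Set (BTree α) := fun p =>
    if h : ∃ Ts, quotIter L Ts = langOf Δ p.1 p.2 then quotIter L h.choose else ∅ with hg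
  have hgd : ∀ p, HasDensity (g p) 0 := by
    intro p
    rw [hg]
    dsimp only
    split
    · exact hasDensity_quotIter h0 _
    · exact hasDensity_empty
  have hU : (⋃ p, g p) = Set.univ := by
    apply Set.eq_univ_of_forall
    intro T
    obtain ⟨Ts, hT⟩ := hcon T
    obtain ⟨F', b', heq⟩ := isLang_quotIter Δ F Ts
    have hex : ∃ Ts', quotIter L Ts' = langOf Δ F' b' := ⟨Ts, heq⟩
    refine Set.mem_iUnion.mpr ⟨(F', b'), ?_⟩
    rw [hg]
    dsimp only
    rw [dif_pos hex]
    have hspec := hex.choose_spec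
    rw [hspec, ← heq]
    exact hT
  have hUd : HasDensity (⋃ p, g p) 0 := hasDensity_iUnion_zero g hgd
  rw [hU] at hUd
  have hone : ∀ n, density (Set.univ : Set (BTree α)) n = 1 := by
    intro n
    unfold density
    have : Nat.card {T : BTree α // T ∈ (Set.univ : Set (BTree α)) ∧ T.size = n}
        = Nat.card {T : BTree α // T.size = n} := by
      apply Nat.card_congr
      exact Equiv.subtypeEquivRight (by simp)
    rw [this, card_size]
    rw [div_eq_one_iff_eq (denom_pos n).ne']
    push_cast
    ring
  have : Tendsto (fun _ : ℕ => (1 : ℝ)) atTop (𝓝 0) := by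
    have := hUd
    rwa [HasDensity, funext hone] at this
  exact one_ne_zero (tendsto_nhds_unique tendsto_const_nhds this)

/-! ### From quotients to forbidden subtrees -/

theorem not_subtree_of_not_quotIter {L : Set (BTree α)} {S : BTree α}
    (hS : ∀ Ts : List (BTree α), S ∉ quotIter L Ts) :
    ∀ {T : BTree α}, BTree.Subtree S T → ∀ Ts : List (BTree α), T ∉ quotIter L Ts := by
  intro T h
  induction h with
  | refl => exact fun Ts hT => hS Ts hT
  | left h ih =>
    rename_i l r a
    intro Ts hT
    exact ih (r :: Ts) (Or.inl ⟨a, hT⟩)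
  | right h ih =>
    rename_i l r a
    intro Ts hT
    exact ih (l :: Ts) (Or.inr ⟨a, hT⟩)


/-- A regular tree language of asymptotic density 0 has a forbidden subtree. -/
theorem forbidden_subtree_of_sparse_regular {α : Type*} [Fintype α] [Nonempty α]
    (L : Set (BTree α)) (hL : RegularTreeLang L) (h0 : HasDensity L 0) :
    ∃ S : BTree α, {T : BTree α | BTree.Subtree S T} ∩ L = ∅ := by
  obtain ⟨Q, fQ, Δ, F, hLeq⟩ := hL
  haveI := fQ
  subst hLeq
  obtain ⟨S, hS⟩ := exists_not_mem_quotIter Δ F h0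
  refine ⟨S, ?_⟩
  rw [Set.eq_empty_iff_forall_notMem]
  rintro T ⟨hsub, hTL⟩
  exact not_subtree_of_not_quotIter hS hsub [] hTL

end Sparse
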